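/- The involution γ acts on Fix(β) ⊂ 𝕋³₍₅₆₇₎ by permuting its 4 circle components in 2 pairs without fixed points, and β acts on the 4 components of Fix(γ) likewise; hence the quotient 𝕋³/⟨β,γ⟩ has singular set consisting of exactly 4 circles. -/
import Mathlib


/-- The circle `ℝ/ℤ`. -/
abbrev Circ := AddCircle (1 : ℝ)

/-- The 3-torus `𝕋³ = ℝ³/ℤ³`, with coordinates `(x₅,x₆,x₇)`. -/
abbrev T3 := Fin 3 → Circ

noncomputable def half : Circ := ((1/2 : ℝ) : Circ)
noncomputable def quarter : Circ := ((1/4 : ℝ) : Circ)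
noncomputable def threeQuarter : Circ := ((3/4 : ℝ) : Circ)

/-- The restriction of `β` to `𝕋³₍₅₆₇₎`: `(x₅,x₆,x₇) ↦ (x₅, -x₆+1/2, -x₇)`. -/
noncomputable def bβ (x : T3) : T3 := ![x 0, -x 1 + half, -x 2]

/-- The restriction of `γ` to `𝕋³₍₅₆₇₎`: `(x₅,x₆,x₇) ↦ (-x₅+1/2, x₆, -x₇+1/2)`. -/
noncomputable def bγ (x : T3) : T3 := ![-x 0 + half, x 1, -x 2 + half]

/-- One of the four circles of `Fix(β) = S¹ × {1/4,3/4} × {0,1/2}`. -/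
noncomputable def circβ (b c : Bool) : Set T3 :=
  {x | x 1 = (if b then threeQuarter else quarter) ∧ x 2 = (if c then half else 0)}

/-- One of the four circles of `Fix(γ) = {1/4,3/4} × S¹ × {1/4,3/4}`. -/
noncomputable def circγ (a c : Bool) : Set T3 :=
  {x | x 0 = (if a then threeQuarter else quarter) ∧
       x 2 = (if c then threeQuarter else quarter)}

/-- Four chosen representative circles, one from each pair. -/
noncomputable def chosen : Fin 4 → Set T3 :=
  ![circβ false false, circβ true false, circγ false false, circγ true false]

/-- The orbit-saturation of a set under the group `⟨β,γ⟩`. -/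
noncomputable def sat (S : Set T3) : Set T3 := S ∪ bβ '' S ∪ bγ '' S ∪ (bβ ∘ bγ) '' S

lemma circ_coe_eq_coe {a b : ℝ} : ((a : Circ) = (b : Circ)) ↔ ∃ n : ℤ, a - b = n := by
  rw [QuotientAddGroup.eq_iff_sub_mem, AddSubgroup.mem_zmultiples_iff]
  simp [eq_comm]

lemma circ_eq_of (a b : ℝ) (n : ℤ) (h : a - b = n) : (a : Circ) = (b : Circ) :=
  circ_coe_eq_coe.mpr ⟨n, h⟩

lemma circ_ne (a b : ℝ) (h1 : -1 < a - b) (h2 : a - b < 1) (h3 : a ≠ b) :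
    (a : Circ) ≠ (b : Circ) := by
  rw [Ne, circ_coe_eq_coe]
  rintro ⟨n, hn⟩
  have ha : n < 1 := by exact_mod_cast (by linarith : (n:ℝ) < 1)
  have hb : (-1:ℤ) < n := by exact_mod_cast (by linarith : (-1:ℝ) < n)
  have : n = 0 := by omega
  rw [this] at hn
  simp at hn
  exact h3 (by linarith)

lemma circ_double (y : Circ) (c : ℝ) :
    y + y = (c : Circ) ↔ y = ((c/2 : ℝ) : Circ) ∨ y = ((c/2 + 1/2 : ℝ) : Circ) := by
  induction y using QuotientAddGroup.induction_on with
  | H r =>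
    show ((r : Circ) + r = _) ↔ _
    rw [← AddCircle.coe_add, circ_coe_eq_coe, circ_coe_eq_coe, circ_coe_eq_coe]
    constructor
    · rintro ⟨n, hn⟩
      rcases Int.even_or_odd n with ⟨m, hm⟩ | ⟨m, hm⟩
      · exact Or.inl ⟨m, by subst hm; push_cast at hn ⊢; linarith⟩
      · exact Or.inr ⟨m, by subst hm; push_cast at hn ⊢; linarith⟩
    · rintro (⟨m, hm⟩ | ⟨m, hm⟩)
      · exact ⟨2*m, by push_cast; linarith⟩
      · exact ⟨2*m+1, by push_cast; linarith⟩

-- basic arithmetic facts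
lemma zero_c : (0 : Circ) = ((0:ℝ) : Circ) := rfl
lemma neg_q : -quarter = threeQuarter := by
  rw [quarter, threeQuarter, ← AddCircle.coe_neg]; exact circ_eq_of _ _ (-1) (by norm_num)
lemma neg_t : -threeQuarter = quarter := by
  rw [quarter, threeQuarter, ← AddCircle.coe_neg]; exact circ_eq_of _ _ (-1) (by norm_num)
lemma neg_h : -half = half := by
  rw [half, ← AddCircle.coe_neg]; exact circ_eq_of _ _ (-1) (by norm_num)
lemma nqh : -quarter + half = quarter := by
  rw [quarter, half, ← AddCircle.coe_neg, ← AddCircle.coe_add]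
  exact circ_eq_of _ _ 0 (by norm_num)
lemma nth : -threeQuarter + half = threeQuarter := by
  rw [threeQuarter, half, ← AddCircle.coe_neg, ← AddCircle.coe_add]
  exact circ_eq_of _ _ (-1) (by norm_num)
lemma q_ne_t : quarter ≠ threeQuarter := by
  rw [quarter, threeQuarter]; exact circ_ne _ _ (by norm_num) (by norm_num) (by norm_num)
lemma h_ne_z : half ≠ 0 := by
  rw [half, zero_c]; exact circ_ne _ _ (by norm_num) (by norm_num) (by norm_num)
lemma z_ne_q : (0:Circ) ≠ quarter := by
  rw [quarter, zero_c]; exact circ_ne _ _ (by norm_num) (by norm_num) (by norm_num)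
lemma z_ne_t : (0:Circ) ≠ threeQuarter := by
  rw [threeQuarter, zero_c]; exact circ_ne _ _ (by norm_num) (by norm_num) (by norm_num)
lemma h_ne_q : half ≠ quarter := by
  rw [quarter, half]; exact circ_ne _ _ (by norm_num) (by norm_num) (by norm_num)
lemma h_ne_t : half ≠ threeQuarter := by
  rw [threeQuarter, half]; exact circ_ne _ _ (by norm_num) (by norm_num) (by norm_num)

lemma double_half (y : Circ) : y + y = half ↔ y = quarter ∨ y = threeQuarter := by
  rw [half, circ_double, quarter, threeQuarter]; norm_num

lemma double_zero (y : Circ) : y + y = 0 ↔ y = 0 ∨ y = half := by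
  rw [zero_c, circ_double, half]; norm_num

lemma fix_comp (y : Circ) (c : Circ) : (-y + c = y) ↔ y + y = c := by
  rw [neg_add_eq_iff_eq_add, eq_comm]

lemma bβ0 (x : T3) : bβ x 0 = x 0 := rfl
lemma bβ1 (x : T3) : bβ x 1 = -x 1 + half := rfl
lemma bβ2 (x : T3) : bβ x 2 = -x 2 := rfl
lemma bγ0 (x : T3) : bγ x 0 = -x 0 + half := rfl
lemma bγ1 (x : T3) : bγ x 1 = x 1 := rfl
lemma bγ2 (x : T3) : bγ x 2 = -x 2 + half := rfl

lemma funext3 {x y : T3} (h0 : x 0 = y 0) (h1 : x 1 = y 1) (h2 : x 2 = y 2) : x = y := by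
  funext i; fin_cases i <;> assumption

lemma fixβ_iff (x : T3) :
    bβ x = x ↔ (x 1 = quarter ∨ x 1 = threeQuarter) ∧ (x 2 = 0 ∨ x 2 = half) := by
  constructor
  · intro h
    have h1 := congrFun h 1
    have h2 := congrFun h 2
    rw [bβ1, fix_comp, double_half] at h1
    rw [bβ2] at h2
    have h2' : x 2 + x 2 = 0 := by
      nth_rewrite 1 [← h2]; exact neg_add_cancel _
    rw [double_zero] at h2'
    exact ⟨h1, h2'⟩
  · rintro ⟨h1, h2⟩
    refine funext3 (bβ0 x) ?_ ?_
    · rw [bβ1, fix_comp, double_half]; exact h1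
    · rw [bβ2]
      rcases h2 with h | h <;> rw [h]
      · exact neg_zero
      · exact neg_h

lemma fixγ_iff (x : T3) :
    bγ x = x ↔ (x 0 = quarter ∨ x 0 = threeQuarter) ∧
               (x 2 = quarter ∨ x 2 = threeQuarter) := by
  constructor
  · intro h
    have h0 := congrFun h 0
    have h2 := congrFun h 2
    rw [bγ0, fix_comp, double_half] at h0
    rw [bγ2, fix_comp, double_half] at h2
    exact ⟨h0, h2⟩
  · rintro ⟨h0, h2⟩
    refine funext3 ?_ (bγ1 x) ?_
    · rw [bγ0, fix_comp, double_half]; exact h0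
    · rw [bγ2, fix_comp, double_half]; exact h2

lemma bγ_invol (x : T3) : bγ (bγ x) = x := by
  refine funext3 ?_ ?_ ?_
  · rw [bγ0, bγ0]; abel
  · rw [bγ1, bγ1]
  · rw [bγ2, bγ2]; abel

lemma bβ_invol (x : T3) : bβ (bβ x) = x := by
  refine funext3 ?_ ?_ ?_
  · rw [bβ0, bβ0]
  · rw [bβ1, bβ1]; abel
  · rw [bβ2, bβ2]; abel

lemma bγ_maps (b c : Bool) : ∀ x ∈ circβ b c, bγ x ∈ circβ b (!c) := by
  rintro x ⟨h1, h2⟩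
  refine ⟨by rw [bγ1]; exact h1, ?_⟩
  rw [bγ2, h2]
  cases c
  · simp
  · simpa using neg_add_cancel half

lemma bβ_maps (a c : Bool) : ∀ x ∈ circγ a c, bβ x ∈ circγ a (!c) := by
  rintro x ⟨h0, h2⟩
  refine ⟨by rw [bβ0]; exact h0, ?_⟩
  rw [bβ2, h2]
  cases c
  · simpa using neg_q
  · simpa using neg_t

lemma bβ_fix_circβ (b c : Bool) : ∀ x ∈ circβ b c, bβ x = x := by
  rintro x ⟨h1, h2⟩
  rw [fixβ_iff]
  constructor
  · cases b
    · exact Or.inl (by simpa using h1)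
    · exact Or.inr (by simpa using h1)
  · cases c
    · exact Or.inl (by simpa using h2)
    · exact Or.inr (by simpa using h2)

lemma bγ_fix_circγ (a c : Bool) : ∀ x ∈ circγ a c, bγ x = x := by
  rintro x ⟨h0, h2⟩
  rw [fixγ_iff]
  constructor
  · cases a
    · exact Or.inl (by simpa using h0)
    · exact Or.inr (by simpa using h0)
  · cases c
    · exact Or.inl (by simpa using h2)
    · exact Or.inr (by simpa using h2)

lemma image_fix {f : T3 → T3} {S : Set T3} (h : ∀ x ∈ S, f x = x) : f '' S = S := by
  apply Set.Subset.antisymm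
  · rintro y ⟨x, hx, rfl⟩; rwa [h x hx]
  · intro x hx; exact ⟨x, hx, h x hx⟩

lemma bγ_image_circβ (b c : Bool) : bγ '' circβ b c = circβ b (!c) := by
  apply Set.Subset.antisymm
  · rintro y ⟨x, hx, rfl⟩; exact bγ_maps b c x hx
  · intro y hy
    refine ⟨bγ y, ?_, bγ_invol y⟩
    have := bγ_maps b (!c) y hy
    rwa [Bool.not_not] at this

lemma bβ_image_circγ (a c : Bool) : bβ '' circγ a c = circγ a (!c) := by
  apply Set.Subset.antisymm
  · rintro y ⟨x, hx, rfl⟩; exact bβ_maps a c x hx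
  · intro y hy
    refine ⟨bβ y, ?_, bβ_invol y⟩
    have := bβ_maps a (!c) y hy
    rwa [Bool.not_not] at this

lemma sat_circβ (b c : Bool) : sat (circβ b c) = circβ b c ∪ circβ b (!c) := by
  unfold sat
  rw [image_fix (bβ_fix_circβ b c), bγ_image_circβ, Set.image_comp, bγ_image_circβ,
      image_fix (bβ_fix_circβ b (!c))]
  ext x; simp only [Set.mem_union]; tauto

lemma sat_circγ (a c : Bool) : sat (circγ a c) = circγ a c ∪ circγ a (!c) := by
  unfold sat
  rw [bβ_image_circγ, image_fix (bγ_fix_circγ a c), Set.image_comp,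
      image_fix (bγ_fix_circγ a c), bβ_image_circγ]
  ext x; simp only [Set.mem_union]; tauto

lemma fixβ_circ (x : T3) : bβ x = x ↔
    (x ∈ circβ false false ∨ x ∈ circβ false true ∨
     x ∈ circβ true false ∨ x ∈ circβ true true) := by
  rw [fixβ_iff]
  simp only [circβ, Set.mem_setOf_eq, if_true, if_false, Bool.false_eq_true]
  tauto

lemma fixγ_circ (x : T3) : bγ x = x ↔
    (x ∈ circγ false false ∨ x ∈ circγ false true ∨
     x ∈ circγ true false ∨ x ∈ circγ true true) := by
  rw [fixγ_iff]
  simp only [circγ, Set.mem_setOf_eq, if_true, if_false, Bool.false_eq_true]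
  tauto

lemma circβ_disj {b b' c c' : Bool} (h : b ≠ b') : Disjoint (circβ b c) (circβ b' c') := by
  rw [Set.disjoint_left]
  rintro x ⟨h1, _⟩ ⟨h1', _⟩
  rw [h1] at h1'
  cases b <;> cases b' <;> simp_all [q_ne_t, q_ne_t.symm]

lemma circβγ_disj {b c a c' : Bool} : Disjoint (circβ b c) (circγ a c') := by
  rw [Set.disjoint_left]
  rintro x ⟨_, h2⟩ ⟨_, h2'⟩
  rw [h2] at h2'
  cases c <;> cases c' <;>
    simp_all [z_ne_q, z_ne_t, h_ne_q, h_ne_t]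

lemma circγ_disj {a a' c c' : Bool} (h : a ≠ a') : Disjoint (circγ a c) (circγ a' c') := by
  rw [Set.disjoint_left]
  rintro x ⟨h0, _⟩ ⟨h0', _⟩
  rw [h0] at h0'
  cases a <;> cases a' <;> simp_all [q_ne_t, q_ne_t.symm]

lemma hd {S T S' T' : Set T3} (h1 : Disjoint S S') (h2 : Disjoint S T')
    (h3 : Disjoint T S') (h4 : Disjoint T T') : Disjoint (S ∪ T) (S' ∪ T') := by
  simp [Set.disjoint_union_left, Set.disjoint_union_right, *]

/-- `γ` permutes the 4 circle components of `Fix(β)` in 2 pairs without fixed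
points, and `β` likewise permutes the 4 components of `Fix(γ)`; hence the
singular set of `𝕋³/⟨β,γ⟩` (the image of the points with nontrivial
stabilizer) consists of exactly 4 circles. -/
theorem singular_set_four_circles :
    -- `γ` maps the circle `circβ b c` onto `circβ b (!c)`, without fixed points
    (∀ b c, bγ '' circβ b c = circβ b (!c)) ∧
    (∀ b c, ∀ x ∈ circβ b c, bγ x ≠ x) ∧
    -- `β` maps the circle `circγ a c` onto `circγ a (!c)`, without fixed points
    (∀ a c, bβ '' circγ a c = circγ a (!c)) ∧
    (∀ a c, ∀ x ∈ circγ a c, bβ x ≠ x) ∧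
    -- the points with nontrivial stabilizer are exactly `Fix(β) ∪ Fix(γ)` …
    (∀ x : T3, (bβ x = x ∨ bγ x = x ∨ bβ (bγ x) = x) ↔ (bβ x = x ∨ bγ x = x)) ∧
    -- … and this set is the saturation of 4 circles with disjoint saturations,
    -- so the singular set of the quotient is exactly 4 circles
    ({x : T3 | bβ x = x ∨ bγ x = x} = ⋃ i, sat (chosen i)) ∧
    (∀ i j, i ≠ j → Disjoint (sat (chosen i)) (sat (chosen j))) := by
  refine ⟨bγ_image_circβ, ?_, bβ_image_circγ, ?_, ?_, ?_, ?_⟩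
  · rintro b c x ⟨h1, h2⟩ heq
    have h' := congrFun heq 2
    rw [bγ2, h2] at h'
    cases c <;> simp_all [h_ne_z, h_ne_z.symm, (Ne.symm h_ne_z)]
  · rintro a c x ⟨h0, h2⟩ heq
    have h' := congrFun heq 2
    rw [bβ2, h2] at h'
    cases c <;> simp_all [neg_q, neg_t, q_ne_t, q_ne_t.symm]
  · intro x
    constructor
    · rintro (h | h | h)
      · exact Or.inl h
      · exact Or.inr h
      · exfalso
        have h' := congrFun h 2
        rw [bβ2, bγ2] at h'
        have h'' : x 2 - half = x 2 := by
          rw [show x 2 - half = -(-x 2 + half) by abel]; exact h'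
        exact h_ne_z (sub_eq_self.mp h'')
    · tauto
  · have hex : (⋃ i, sat (chosen i)) =
        sat (chosen 0) ∪ sat (chosen 1) ∪ sat (chosen 2) ∪ sat (chosen 3) := by
      ext x
      simp only [Set.mem_iUnion, Set.mem_union]
      constructor
      · rintro ⟨i, hi⟩
        fin_cases i
        · exact Or.inl (Or.inl (Or.inl hi))
        · exact Or.inl (Or.inl (Or.inr hi))
        · exact Or.inl (Or.inr hi)
        · exact Or.inr hi
      · rintro (((h | h) | h) | h)
        exacts [⟨0, h⟩, ⟨1, h⟩, ⟨2, h⟩, ⟨3, h⟩]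
    ext x
    simp only [Set.mem_setOf_eq]
    rw [hex]
    have e0 : chosen 0 = circβ false false := rfl
    have e1 : chosen 1 = circβ true false := rfl
    have e2 : chosen 2 = circγ false false := rfl
    have e3 : chosen 3 = circγ true false := rfl
    rw [e0, e1, e2, e3, sat_circβ, sat_circβ, sat_circγ, sat_circγ]
    simp only [Set.mem_union, Bool.not_false]
    rw [fixβ_circ, fixγ_circ]
    tauto
  · have d01 : Disjoint (sat (circβ false false)) (sat (circβ true false)) := by
      rw [sat_circβ, sat_circβ]
      exact hd (circβ_disj (by simp)) (circβ_disj (by simp))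
        (circβ_disj (by simp)) (circβ_disj (by simp))
    have d23 : Disjoint (sat (circγ false false)) (sat (circγ true false)) := by
      rw [sat_circγ, sat_circγ]
      exact hd (circγ_disj (by simp)) (circγ_disj (by simp))
        (circγ_disj (by simp)) (circγ_disj (by simp))
    have dβγ : ∀ b c a c', Disjoint (sat (circβ b c)) (sat (circγ a c')) := by
      intro b c a c'
      rw [sat_circβ, sat_circγ]
      exact hd circβγ_disj circβγ_disj circβγ_disj circβγ_disj
    have e0 : chosen 0 = circβ false false := rfl
    have e1 : chosen 1 = circβ true false := rfl
    have e2 : chosen 2 = circγ false false := rfl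
    have e3 : chosen 3 = circγ true false := rfl
    have D01 : Disjoint (sat (chosen 0)) (sat (chosen 1)) := by rw [e0, e1]; exact d01
    have D23 : Disjoint (sat (chosen 2)) (sat (chosen 3)) := by rw [e2, e3]; exact d23
    have D02 : Disjoint (sat (chosen 0)) (sat (chosen 2)) := by
      rw [e0, e2]; exact dβγ _ _ _ _
    have D03 : Disjoint (sat (chosen 0)) (sat (chosen 3)) := by
      rw [e0, e3]; exact dβγ _ _ _ _
    have D12 : Disjoint (sat (chosen 1)) (sat (chosen 2)) := by
      rw [e1, e2]; exact dβγ _ _ _ _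
    have D13 : Disjoint (sat (chosen 1)) (sat (chosen 3)) := by
      rw [e1, e3]; exact dβγ _ _ _ _
    intro i j hij
    fin_cases i <;> fin_cases j <;>
      first
        | exact absurd rfl hij
        | exact D01
        | exact D01.symm
        | exact D23
        | exact D23.symm
        | exact D02
        | exact D02.symm
        | exact D03
        | exact D03.symm
        | exact D12
        | exact D12.symm
        | exact D13
        | exact D13.symm
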